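/- In the classifier NOp^{NOp+1} for the polynomial monad NOp of non-symmetric operads, every connected component of each category in the collection has a terminal object; hence NOp is a tame polynomial monad. A terminal object of a component is a planar rooted tree with vertices coloured by X and K such that adjacent vertices have different colours and all vertices incident to the root or to a leaf are coloured X. -/

import Mathlib

/-!
STATEMENT 15: In the classifier `NOp^{NOp+1}` for the polynomial monad for
non-symmetric operads — whose objects are (isomorphism classes of) planar rooted
trees with vertices coloured by `X` and `K`, and whose morphisms are generated by
contracting edges between `X`-coloured vertices and inserting unary `X`-coloured
vertices — every connected component has a terminal object; hence `NOp` is tame.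
Moreover a terminal object of a component is a tree in which adjacent vertices have
different colours and every vertex incident to the root or to a leaf is coloured `X`.

We model the classifier as the preorder generated by the one-step moves (the
classifier category of trees is a preorder), with `X = true`, `K = false`.
-/

/-- Planar rooted trees with vertices coloured by `X`/`K` (encoded as `Bool`,
`X = true`).  `leaf` represents a leaf edge (no vertex). -/
inductive CTree : Type
  | leaf : CTree
  | node : Bool → List CTree → CTree

namespace CTree

/-- One-step moves of the classifier `NOp^{NOp+1}`: contracting an edge between two
`X`-coloured vertices, inserting a unary `X`-coloured vertex below the root, above
any edge, and the congruence closure under subtrees. -/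
inductive Step : CTree → CTree → Prop
  -- contract an edge between two `X`-vertices
  | contract (cs₁ cs₂ ds : List CTree) :
      Step (node true (cs₁ ++ [node true ds] ++ cs₂)) (node true (cs₁ ++ ds ++ cs₂))
  -- insert a unary `X`-vertex below a tree (on the root edge or on any inner edge,
  -- via the congruence rule)
  | insert (t : CTree) : Step t (node true [t])
  -- congruence: perform a move in a subtree
  | congr (c : Bool) (cs₁ cs₂ : List CTree) {t t' : CTree} :
      Step t t' → Step (node c (cs₁ ++ [t] ++ cs₂)) (node c (cs₁ ++ [t'] ++ cs₂))

/-- Morphisms of the classifier: finite composites of one-step moves. -/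
def Reaches : CTree → CTree → Prop := Relation.ReflTransGen Step

/-- Two objects are in the same connected component if they are related by a zigzag
of morphisms. -/
def Connected : CTree → CTree → Prop :=
  Relation.ReflTransGen (fun s t => Step s t ∨ Step t s)

/-- `Ok c t`: in the tree `t`, hanging below a vertex of colour `c`, adjacent
vertices have different colours and every vertex incident to a leaf is coloured `X`
(in particular a leaf may only hang below an `X`-vertex). -/
inductive Ok : Bool → CTree → Prop
  | leaf : Ok true leaf
  | node {c c' : Bool} {cs : List CTree} :
      c' ≠ c → (∀ t ∈ cs, Ok c' t) → Ok c (node c' cs)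

/-- Terminal trees: the root vertex is coloured `X`, adjacent vertices have different
colours, and vertices incident to the root or to a leaf are coloured `X`. -/
def IsTerm : CTree → Prop
  | leaf => False
  | node c cs => c = true ∧ ∀ t ∈ cs, Ok true t

def flat : CTree → List CTree
  | leaf => [leaf]
  | node true cs => (cs.attach.map (fun c => flat c.1)).flatten
  | node false cs => [node false (cs.attach.map (fun c => node true (flat c.1)))]
decreasing_by all_goals (have := List.sizeOf_lt_of_mem c.2; simp; omega)

theorem flat_true (cs : List CTree) : flat (node true cs) = (cs.map flat).flatten := by
  rw [flat]; congr 1; simp [List.attach_map_val]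
theorem flat_false (cs : List CTree) :
    flat (node false cs) = [node false (cs.map (fun c => node true (flat c)))] := by
  rw [flat]; congr 2; simp [List.attach_map_val]

/-- custom induction principle -/
theorem ind (P : CTree → Prop) (hl : P leaf)
    (hn : ∀ c cs, (∀ t ∈ cs, P t) → P (node c cs)) : ∀ t, P t := by
  have key : ∀ n t, sizeOf t ≤ n → P t := by
    intro n
    induction n with
    | zero => intro t h; cases t <;> simp at h
    | succ n ih =>
      intro t h
      cases t with
      | leaf => exact hl
      | node c cs =>
        refine hn c cs fun s hs => ih s ?_
        have := List.sizeOf_lt_of_mem hs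
        simp at h; omega
  exact fun t => key (sizeOf t) t le_rfl

theorem reaches_trans {a b c : CTree} (h1 : Reaches a b) (h2 : Reaches b c) : Reaches a c :=
  Relation.ReflTransGen.trans h1 h2

theorem reaches_congr (c : Bool) (l₁ l₂ : List CTree) {t t' : CTree} (h : Reaches t t') :
    Reaches (node c (l₁ ++ [t] ++ l₂)) (node c (l₁ ++ [t'] ++ l₂)) := by
  induction h with
  | refl => exact Relation.ReflTransGen.refl
  | tail _ hst ih => exact ih.tail (Step.congr c l₁ l₂ hst)

theorem reaches_list (c : Bool) :
    ∀ {cs cs' : List CTree}, List.Forall₂ Reaches cs cs' → ∀ pre : List CTree,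
      Reaches (node c (pre ++ cs)) (node c (pre ++ cs')) := by
  intro cs cs' h
  induction h with
  | nil => intro pre; exact Relation.ReflTransGen.refl
  | @cons a b l l' hab _ ih =>
    intro pre
    have h1 : Reaches (node c (pre ++ a :: l)) (node c (pre ++ b :: l)) := by
      have := reaches_congr c pre l hab
      simpa using this
    have h2 := ih (pre ++ [b])
    simp only [List.append_assoc, List.singleton_append] at h2
    exact reaches_trans h1 h2

theorem forall₂_map {cs : List CTree} {f : CTree → CTree} (h : ∀ t ∈ cs, Reaches t (f t)) :
    List.Forall₂ Reaches cs (cs.map f) := by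
  induction cs with
  | nil => exact List.Forall₂.nil
  | cons a l ih =>
    exact List.Forall₂.cons (h a (by simp)) (ih fun t ht => h t (by simp [ht]))

theorem contract_all : ∀ (lss : List (List CTree)) (pre : List CTree),
    Reaches (node true (pre ++ lss.map (fun l => node true l)))
      (node true (pre ++ lss.flatten)) := by
  intro lss
  induction lss with
  | nil => intro pre; simp; exact Relation.ReflTransGen.refl
  | cons l ls ih =>
    intro pre
    have h1 : Step (node true (pre ++ [node true l] ++ ls.map (fun l => node true l)))
        (node true (pre ++ l ++ ls.map (fun l => node true l))) := Step.contract _ _ _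
    have h2 := ih (pre ++ l)
    simp only [List.append_assoc] at h1 h2 ⊢
    simp only [List.map_cons, List.flatten_cons]
    exact reaches_trans (Relation.ReflTransGen.single (by simpa using h1)) h2

theorem reaches_flat : ∀ t : CTree, Reaches t (node true (flat t)) := by
  refine ind _ ?_ ?_
  · rw [show flat leaf = [leaf] from by rw [flat]]
    exact Relation.ReflTransGen.single (Step.insert leaf)
  · intro c cs ih
    cases c with
    | true =>
      have h1 : Reaches (node true cs) (node true (cs.map (fun t => node true (flat t)))) := by
        simpa using reaches_list true (forall₂_map ih) []
      have h2 := contract_all (cs.map flat) []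
      simp only [List.nil_append, List.map_map] at h2
      rw [flat_true]
      exact reaches_trans h1 h2
    | false =>
      have h1 : Reaches (node false cs) (node false (cs.map (fun t => node true (flat t)))) := by
        simpa using reaches_list false (forall₂_map ih) []
      rw [flat_false]
      exact h1.tail (Step.insert _)

theorem flat_ok : ∀ t : CTree, ∀ u ∈ flat t, Ok true u := by
  refine ind _ ?_ ?_
  · intro u hu; rw [flat] at hu; simp at hu; subst hu; exact Ok.leaf
  · intro c cs ih
    cases c with
    | true =>
      intro u hu
      rw [flat_true] at hu
      simp only [List.mem_flatten, List.mem_map] at hu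
      obtain ⟨l, ⟨t, ht, rfl⟩, hul⟩ := hu
      exact ih t ht u hul
    | false =>
      intro u hu
      rw [flat_false] at hu
      simp only [List.mem_singleton] at hu
      subst hu
      refine Ok.node (by simp) ?_
      intro s hs
      simp only [List.mem_map] at hs
      obtain ⟨t, ht, rfl⟩ := hs
      exact Ok.node (by simp) fun u hu => ih t ht u hu

theorem flat_step {s t : CTree} (h : Step s t) : flat s = flat t := by
  induction h with
  | contract cs₁ cs₂ ds =>
    simp [flat_true, List.map_append]
  | insert t => simp [flat_true]
  | congr c cs₁ cs₂ hst ih =>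
    cases c with
    | true => simp [flat_true, List.map_append, ih]
    | false => simp [flat_false, List.map_append, ih]

theorem flat_connected {s t : CTree} (h : Connected s t) : flat s = flat t := by
  induction h with
  | refl => rfl
  | tail _ hst ih => cases hst with
    | inl h' => exact ih.trans (flat_step h')
    | inr h' => exact ih.trans (flat_step h').symm

end CTree

open CTree

/-- Tameness of the polynomial monad `NOp` (Lemma 4.13 of the
paper): every connected component of the classifier `NOp^{NOp+1}` has a terminal
object, which is an alternating `X`/`K`-tree with `X`-vertices at the root and at
the leaves. -/
theorem nop_tame :
    ∀ S : CTree, ∃ T : CTree, IsTerm T ∧ Reaches S T ∧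
      ∀ S' : CTree, Connected S S' → Reaches S' T := by
  intro S
  refine ⟨node true (flat S), ⟨rfl, flat_ok S⟩, reaches_flat S, ?_⟩
  intro S' h
  rw [flat_connected h]
  exact reaches_flat S'
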